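/- For all a, b ∈ I_2, the wavelet function ψ⁰(·−a) is orthogonal in L²(ℚ_2, μ) to φ(·−b): ∫_{ℚ_2} ψ⁰(x − a) · conj(φ(x − b)) dμ(x) = 0. -/

import Mathlib

open MeasureTheory

/-- The refinable function: the indicator of `ℤ_2` inside `ℚ_[2]`. -/
noncomputable def phi2 : ℚ_[2] → ℂ :=
  Set.indicator {x : ℚ_[2] | ‖x‖ ≤ 1} 1

/-- The 2-adic Haar wavelet function `ψ⁰(x) = φ(x/2) − φ(x/2 − 1/2)`. -/
noncomputable def psi0 : ℚ_[2] → ℂ :=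
  fun x => phi2 (x / 2) - phi2 (x / 2 - 1 / 2)

/-- The set `I_2` of fractional-part representatives of `ℚ_2/ℤ_2`. -/
def I2 : Set ℚ_[2] :=
  {a | ∃ γ m : ℕ, m < 2 ^ γ ∧ a = (m : ℚ_[2]) / (2 : ℚ_[2]) ^ γ}

lemma phi2_apply (y : ℚ_[2]) : phi2 y = if ‖y‖ ≤ 1 then 1 else 0 := by
  simp [phi2, Set.indicator_apply]

lemma norm_half_aux (z : ℚ_[2]) : ‖z / 2‖ ≤ 1 ↔ ‖z‖ ≤ 1 / 2 := by
  have h2 : ‖(2:ℚ_[2])‖ = 2⁻¹ := by exact_mod_cast Padic.norm_p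
  rw [norm_div, h2]
  rw [div_le_iff₀ (by norm_num)]
  constructor <;> intro h <;> linarith

lemma psi0_eq (z : ℚ_[2]) :
    psi0 z = (if ‖z‖ ≤ 1/2 then (1:ℂ) else 0) - (if ‖z - 1‖ ≤ 1/2 then (1:ℂ) else 0) := by
  have h1 : z / 2 - 1 / 2 = (z - 1) / 2 := by ring
  rw [psi0, h1, phi2_apply, phi2_apply]
  rw [if_congr (norm_half_aux z) rfl rfl, if_congr (norm_half_aux (z-1)) rfl rfl]

theorem wavelet_orthogonal_to_refinable [MeasurableSpace ℚ_[2]] [BorelSpace ℚ_[2]]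
    (μ : Measure ℚ_[2]) [μ.IsAddHaarMeasure]
    (hμ : μ {x : ℚ_[2] | ‖x‖ ≤ 1} = 1)
    (a b : ℚ_[2]) (ha : a ∈ I2) (hb : b ∈ I2) :
    ∫ x, psi0 (x - a) * (starRingEnd ℂ) (phi2 (x - b)) ∂μ = 0 := by
  classical
  set A : Set ℚ_[2] := {x | ‖x - a‖ ≤ 1/2} with hA_def
  set A' : Set ℚ_[2] := {x | ‖x - (a+1)‖ ≤ 1/2} with hA'_def
  -- measurability
  have hAm : MeasurableSet A :=
    (isClosed_le ((continuous_sub_right a).norm) continuous_const).measurableSet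
  have hA'm : MeasurableSet A' :=
    (isClosed_le ((continuous_sub_right (a+1)).norm) continuous_const).measurableSet
  -- measure of the unit ball around a
  have hball : μ {x : ℚ_[2] | ‖x - a‖ ≤ 1} = 1 := by
    have : {x : ℚ_[2] | ‖x - a‖ ≤ 1} = (fun x => x + (-a)) ⁻¹' {x : ℚ_[2] | ‖x‖ ≤ 1} := by
      ext x; simp [sub_eq_add_neg]
    rw [this, measure_preimage_add_right, hμ]
  have hAfin : μ A < ⊤ := by
    have hsub : A ⊆ {x : ℚ_[2] | ‖x - a‖ ≤ 1} := by
      intro x hx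
      have hx' : ‖x - a‖ ≤ 1/2 := hx
      exact le_trans hx' (by norm_num)
    calc μ A ≤ μ {x : ℚ_[2] | ‖x - a‖ ≤ 1} := measure_mono hsub
    _ = 1 := hball
    _ < ⊤ := ENNReal.one_lt_top
  have hAA' : μ A' = μ A := by
    have : A' = (fun x => x + (-1)) ⁻¹' A := by
      ext x
      simp only [hA_def, hA'_def, Set.mem_preimage, Set.mem_setOf_eq]
      have : x + (-1) - a = x - (a + 1) := by ring
      rw [this]
    rw [this, measure_preimage_add_right]
  have hA'fin : μ A' < ⊤ := hAA' ▸ hAfin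
  -- norm of 1
  have hone : ‖(1:ℚ_[2])‖ = 1 := norm_one
  -- members of A ∪ A' are within 1 of a
  have hnear : ∀ x : ℚ_[2], x ∈ A ∪ A' → ‖x - a‖ ≤ 1 := by
    rintro x (hx | hx)
    · exact le_trans hx (by norm_num)
    · have : x - a = (x - (a+1)) + 1 := by ring
      rw [this]
      refine le_trans (Padic.nonarchimedean _ _) ?_
      rw [hone]
      exact max_le (le_trans hx (by norm_num)) le_rfl
  by_cases hab : ‖a - b‖ ≤ 1
  · -- same coset: b-ball contains both half-balls
    have hpt : ∀ x : ℚ_[2], psi0 (x - a) * (starRingEnd ℂ) (phi2 (x - b))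
        = A.indicator (fun _ => (1:ℂ)) x - A'.indicator (fun _ => (1:ℂ)) x := by
      intro x
      rw [psi0_eq, phi2_apply, Set.indicator_apply, Set.indicator_apply]
      by_cases hmem : x ∈ A ∪ A'
      · have hxb : ‖x - b‖ ≤ 1 := by
          have : x - b = (x - a) + (a - b) := by ring
          rw [this]
          exact le_trans (Padic.nonarchimedean _ _) (max_le (hnear x hmem) hab)
        rw [if_pos hxb]
        simp only [map_one, mul_one]
        have e1 : (‖x - a‖ ≤ 1/2) ↔ x ∈ A := Iff.rfl
        have e2 : (‖x - a - 1‖ ≤ 1/2) ↔ x ∈ A' := by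
          constructor <;> intro h
          · show ‖x - (a+1)‖ ≤ 1/2; have : x - (a+1) = x - a - 1 := by ring
            rw [this]; exact h
          · have h' : ‖x - (a+1)‖ ≤ 1/2 := h
            have : x - a - 1 = x - (a+1) := by ring
            rw [this]; exact h'
        rw [if_congr e1 rfl rfl, if_congr e2 rfl rfl]
      · have h1 : x ∉ A := fun h => hmem (Or.inl h)
        have h2 : x ∉ A' := fun h => hmem (Or.inr h)
        have e1 : ¬ (‖x - a‖ ≤ 1/2) := h1
        have e2 : ¬ (‖x - a - 1‖ ≤ 1/2) := by
          intro h; apply h2; show ‖x - (a+1)‖ ≤ 1/2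
          have : x - (a+1) = x - a - 1 := by ring
          rw [this]; exact h
        rw [if_neg e1, if_neg e2, if_neg h1, if_neg h2]
        ring
    calc ∫ x, psi0 (x - a) * (starRingEnd ℂ) (phi2 (x - b)) ∂μ
        = ∫ x, (A.indicator (fun _ => (1:ℂ)) x - A'.indicator (fun _ => (1:ℂ)) x) ∂μ := by
          exact integral_congr_ae (Filter.Eventually.of_forall hpt)
      _ = 0 := by
          rw [integral_sub
            ((integrable_indicator_iff hAm).mpr ((integrableOn_const_iff).mpr (Or.inr hAfin)))
            ((integrable_indicator_iff hA'm).mpr ((integrableOn_const_iff).mpr (Or.inr hA'fin)))]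
          rw [integral_indicator_const _ hAm, integral_indicator_const _ hA'm, measureReal_def, measureReal_def, hAA']
          ring
  · -- disjoint cosets: integrand vanishes
    have hpt : ∀ x : ℚ_[2], psi0 (x - a) * (starRingEnd ℂ) (phi2 (x - b)) = 0 := by
      intro x
      rw [psi0_eq, phi2_apply]
      by_cases hxb : ‖x - b‖ ≤ 1
      · have e1 : ¬ (‖x - a‖ ≤ 1/2) := by
          intro h
          apply hab
          have hxa : ‖x - a‖ ≤ 1 := hnear x (Or.inl h)
          have : a - b = -(x - a) + (x - b) := by ring
          rw [this]
          refine le_trans (Padic.nonarchimedean _ _) ?_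
          rw [norm_neg]
          exact max_le hxa hxb
        have e2 : ¬ (‖x - a - 1‖ ≤ 1/2) := by
          intro h
          apply hab
          have h' : x ∈ A' := by
            show ‖x - (a+1)‖ ≤ 1/2
            have : x - (a+1) = x - a - 1 := by ring
            rw [this]; exact h
          have hxa : ‖x - a‖ ≤ 1 := hnear x (Or.inr h')
          have : a - b = -(x - a) + (x - b) := by ring
          rw [this]
          refine le_trans (Padic.nonarchimedean _ _) ?_
          rw [norm_neg]
          exact max_le hxa hxb
        rw [if_neg e1, if_neg e2, if_pos hxb]
        ring
      · rw [if_neg hxb]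
        simp
    calc ∫ x, psi0 (x - a) * (starRingEnd ℂ) (phi2 (x - b)) ∂μ
        = ∫ _x, (0:ℂ) ∂μ := integral_congr_ae (Filter.Eventually.of_forall hpt)
      _ = 0 := integral_zero _ _
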